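/- For all natural numbers n, the sum over k from 0 to n of H_k·H_{n-k} equals (n+1)·[(1 - H^{(2)}_{n+1}) + (H_{n+1} - 1)²]. -/

import Mathlib

open Finset BigOperators

def H (n : ℕ) : ℚ := ∑ i ∈ Finset.range n, 1 / (i + 1 : ℚ)

def H2 (n : ℕ) : ℚ := ∑ i ∈ Finset.range n, 1 / ((i + 1 : ℚ))^2

lemma Hsucc (n : ℕ) : H (n + 1) = H n + 1 / (n + 1 : ℚ) := by
  simp [H, Finset.sum_range_succ]

lemma H2succ (n : ℕ) : H2 (n + 1) = H2 n + 1 / ((n + 1 : ℚ))^2 := by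
  simp [H2, Finset.sum_range_succ]

lemma reflH (n : ℕ) :
    ∑ k ∈ Finset.range (n + 1), (1 : ℚ) / ((n : ℚ) + 1 - k) = H (n + 1) := by
  rw [← Finset.sum_range_reflect]
  unfold H
  apply Finset.sum_congr rfl
  intro k hk
  have hkn : k ≤ n := Nat.lt_succ_iff.mp (Finset.mem_range.mp hk)
  simp only [Nat.add_sub_cancel]
  rw [Nat.cast_sub hkn]
  ring_nf

lemma Psum (n : ℕ) :
    ∑ k ∈ Finset.range (n + 1), (1 : ℚ) / (((k : ℚ) + 1) * ((n : ℚ) + 1 - k))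
      = 2 * H (n + 1) / ((n : ℚ) + 2) := by
  have key : ∀ k ∈ Finset.range (n + 1),
      (1 : ℚ) / (((k : ℚ) + 1) * ((n : ℚ) + 1 - k))
        = (1 / ((n : ℚ) + 2)) * (1 / ((k : ℚ) + 1) + 1 / ((n : ℚ) + 1 - k)) := by
    intro k hk
    have hkn : k ≤ n := Nat.lt_succ_iff.mp (Finset.mem_range.mp hk)
    have h1 : ((k : ℚ) + 1) ≠ 0 := by positivity
    have h2 : ((n : ℚ) + 1 - k) ≠ 0 := by
      have : (k : ℚ) ≤ n := by exact_mod_cast hkn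
      nlinarith
    have h3 : ((n : ℚ) + 2) ≠ 0 := by positivity
    field_simp
    ring
  rw [Finset.sum_congr rfl key, ← Finset.mul_sum, Finset.sum_add_distrib, reflH]
  have : ∑ k ∈ Finset.range (n + 1), (1 : ℚ) / ((k : ℚ) + 1) = H (n + 1) := by
    unfold H; apply Finset.sum_congr rfl; intros; ring_nf
  rw [this]; ring

lemma Bsum (n : ℕ) :
    ∑ k ∈ Finset.range (n + 1), H k / ((n : ℚ) + 1 - k)
      = H (n + 1) ^ 2 - H2 (n + 1) := by
  induction n with
  | zero => simp [H, H2, Finset.sum_range_succ]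
  | succ n ih =>
    rw [Finset.sum_range_succ']
    have step : ∀ k ∈ Finset.range (n + 1),
        H (k + 1) / (((n : ℕ) + 1 : ℚ) + 1 - ((k : ℕ) + 1 : ℕ))
          = H k / ((n : ℚ) + 1 - k)
            + (1 : ℚ) / (((k : ℚ) + 1) * ((n : ℚ) + 1 - k)) := by
      intro k hk
      have hkn : k ≤ n := Nat.lt_succ_iff.mp (Finset.mem_range.mp hk)
      have h1 : ((k : ℚ) + 1) ≠ 0 := by positivity
      have h2 : ((n : ℚ) + 1 - k) ≠ 0 := by
        have : (k : ℚ) ≤ n := by exact_mod_cast hkn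
        nlinarith
      rw [Hsucc]
      push_cast
      have : ((n : ℚ) + 1 + 1 - ((k : ℚ) + 1)) = (n : ℚ) + 1 - k := by ring
      rw [this]
      field_simp
    push_cast
    rw [Finset.sum_congr rfl (by
      intro k hk
      have := step k hk
      push_cast at this ⊢
      exact this), Finset.sum_add_distrib, ih, Psum]
    have h0 : H 0 = 0 := by simp [H]
    rw [h0, Hsucc (n + 1), H2succ (n + 1)]
    push_cast
    have h3 : ((n : ℚ) + 2) ≠ 0 := by positivity
    field_simp
    ring

theorem stmt7 (n : ℕ) :
    ∑ k ∈ Finset.range (n + 1), H k * H (n - k)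
      = (n + 1) * ((1 - H2 (n + 1)) + (H (n + 1) - 1)^2) := by
  induction n with
  | zero => simp [H, H2, Finset.sum_range_succ]
  | succ n ih =>
    have peel : ∑ k ∈ Finset.range (n + 2), H k * H (n + 1 - k)
        = (∑ k ∈ Finset.range (n + 1), H (k + 1) * H (n - k)) + H 0 * H (n + 1) := by
      rw [Finset.sum_range_succ']
      simp [Nat.succ_sub_succ]
    rw [peel]
    have split : ∀ k ∈ Finset.range (n + 1),
        H (k + 1) * H (n - k) = H k * H (n - k) + H (n - k) / ((k : ℚ) + 1) := by
      intro k hk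
      rw [Hsucc]; ring
    rw [Finset.sum_congr rfl split, Finset.sum_add_distrib, ih]
    have refl2 : ∑ k ∈ Finset.range (n + 1), H (n - k) / ((k : ℚ) + 1)
        = ∑ k ∈ Finset.range (n + 1), H k / ((n : ℚ) + 1 - k) := by
      rw [← Finset.sum_range_reflect]
      apply Finset.sum_congr rfl
      intro k hk
      have hkn : k ≤ n := Nat.lt_succ_iff.mp (Finset.mem_range.mp hk)
      simp only [Nat.add_sub_cancel]
      rw [Nat.sub_sub_self hkn]
      congr 1
      rw [Nat.cast_sub hkn]
      ring
    rw [refl2, Bsum]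
    have h0 : H 0 = 0 := by simp [H]
    rw [h0, Hsucc (n + 1), H2succ (n + 1)]
    have h3 : ((n : ℚ) + 2) ≠ 0 := by positivity
    push_cast
    field_simp
    ring
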